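/- (Pósa's theorem, base comparison) The vertex set of every finite simple graph G can be partitioned into at most α(G) vertex-disjoint cycles, where a single vertex or a single edge is accepted as a cycle. -/

import Mathlib

open Finset

/-- A (possibly degenerate) linear cycle in a hypergraph: a single vertex,
a single hyperedge, or a cyclic sequence of hyperedges. -/
inductive LinCyc (V : Type*) where
  | vert : V → LinCyc V
  | edge : Finset V → LinCyc V
  | cyc : (n : ℕ) → (Fin n → Finset V) → LinCyc V

/-- The vertex set of a (degenerate) linear cycle. -/
def LinCyc.verts {V : Type*} [DecidableEq V] : LinCyc V → Finset V
  | .vert v => {v}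
  | .edge h => h
  | .cyc _ e => Finset.univ.biUnion e

/-- The set of hyperedges of a (degenerate) linear cycle. -/
def LinCyc.edgeSet {V : Type*} [DecidableEq V] : LinCyc V → Finset (Finset V)
  | .vert _ => ∅
  | .edge h => {h}
  | .cyc _ e => Finset.univ.image e

/-- Validity of a (degenerate) linear cycle with respect to the edge set `E` of a
hypergraph: a vertex is always valid, a single hyperedge must belong to `E`, and a
proper cyclic sequence must consist of at least 3 hyperedges of `E` such that
consecutive hyperedges (cyclically) intersect in exactly one vertex, and
nonconsecutive hyperedges are disjoint. -/
def LinCyc.valid {V : Type*} [DecidableEq V] (E : Finset (Finset V)) : LinCyc V → Prop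
  | .vert _ => True
  | .edge h => h ∈ E
  | .cyc n e => 3 ≤ n ∧ (∀ i, e i ∈ E) ∧
      (∀ i j : Fin n, ((i : ℕ) + 1) % n = (j : ℕ) → (e i ∩ e j).card = 1) ∧
      (∀ i j : Fin n, i ≠ j → ((i : ℕ) + 1) % n ≠ (j : ℕ) →
        ((j : ℕ) + 1) % n ≠ (i : ℕ) → e i ∩ e j = ∅)

/-- The independence number of the hypergraph with edge set `E`: the maximum size of
a vertex subset containing no hyperedge. -/
def indepNum {V : Type*} [Fintype V] [DecidableEq V] (E : Finset (Finset V)) : ℕ :=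
  Finset.sup (Finset.univ.powerset.filter fun S => ∀ h ∈ E, ¬ h ⊆ S) Finset.card

/-- A linear path: a sequence of hyperedges of `E` where consecutive hyperedges
intersect in exactly one vertex and nonconsecutive hyperedges are disjoint. -/
def IsLinearPath {V : Type*} [DecidableEq V] (E : Finset (Finset V))
    {n : ℕ} (e : Fin n → Finset V) : Prop :=
  (∀ i, e i ∈ E) ∧
  (∀ i j : Fin n, (i : ℕ) + 1 = (j : ℕ) → (e i ∩ e j).card = 1) ∧
  (∀ i j : Fin n, (i : ℕ) + 1 < (j : ℕ) → e i ∩ e j = ∅)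

set_option linter.unusedSectionVars false

section Posa

variable {V : Type*} [Fintype V] [DecidableEq V] (G : SimpleGraph V) [DecidableRel G.Adj]

private def alphaOn (W : Finset V) : ℕ :=
  Finset.sup (W.powerset.filter fun S : Finset V => ∀ a ∈ S, ∀ b ∈ S, ¬ G.Adj a b)
    Finset.card

private lemma modc {i n : ℕ} (h : i < n) :
    ((i + 1) % n = i + 1 ∧ i + 1 < n) ∨ ((i + 1) % n = 0 ∧ i + 1 = n) := by
  rcases lt_or_eq_of_le (Nat.succ_le_of_lt h) with h' | h'
  · exact Or.inl ⟨Nat.mod_eq_of_lt h', h'⟩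
  · have hn : i + 1 = n := h'
    exact Or.inr ⟨by rw [hn, Nat.mod_self], hn⟩

private lemma alpha_drop (W Cv : Finset V) (v1 : V) (hv1W : v1 ∈ W) (hv1C : v1 ∈ Cv)
    (hnbr : ∀ w ∈ W, G.Adj v1 w → w ∈ Cv) :
    alphaOn G (W \ Cv) + 1 ≤ alphaOn G W := by
  classical
  set F := (W \ Cv).powerset.filter fun S : Finset V => ∀ a ∈ S, ∀ b ∈ S, ¬ G.Adj a b
    with hF
  have hne : F.Nonempty := ⟨∅, by simp [hF]⟩
  obtain ⟨S, hS, hSc⟩ := Finset.exists_mem_eq_sup F hne Finset.card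
  rw [hF, Finset.mem_filter, Finset.mem_powerset] at hS
  obtain ⟨hSsub, hSind⟩ := hS
  have hv1S : v1 ∉ S := fun h => (Finset.mem_sdiff.1 (hSsub h)).2 hv1C
  have hmem : insert v1 S ∈ W.powerset.filter
      (fun S : Finset V => ∀ a ∈ S, ∀ b ∈ S, ¬ G.Adj a b) := by
    rw [Finset.mem_filter, Finset.mem_powerset]
    constructor
    · intro x hx
      rcases Finset.mem_insert.1 hx with rfl | hx
      · exact hv1W
      · exact (Finset.mem_sdiff.1 (hSsub hx)).1
    · intro a ha b hb hadj
      rcases Finset.mem_insert.1 ha with ha' | ha'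
      · rcases Finset.mem_insert.1 hb with hb' | hb'
        · exact G.irrefl (ha' ▸ hb' ▸ hadj)
        · have hbW : b ∈ W := (Finset.mem_sdiff.1 (hSsub hb')).1
          exact (Finset.mem_sdiff.1 (hSsub hb')).2 (hnbr b hbW (ha' ▸ hadj))
      · rcases Finset.mem_insert.1 hb with hb' | hb'
        · have haW : a ∈ W := (Finset.mem_sdiff.1 (hSsub ha')).1
          exact (Finset.mem_sdiff.1 (hSsub ha')).2 (hnbr a haW (hb' ▸ hadj).symm)
        · exact hSind a ha' b hb' hadj
  have hle := Finset.le_sup (f := Finset.card) hmem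
  rw [Finset.card_insert_of_notMem hv1S] at hle
  calc alphaOn G (W \ Cv) + 1 = S.card + 1 := by rw [alphaOn, ← hF, hSc]
    _ ≤ alphaOn G W := hle

private lemma extend_path (W : Finset V) :
    ∀ (m : ℕ) (v1 : V) (t : List V), (v1 :: t).Nodup → (∀ x ∈ v1 :: t, x ∈ W) →
      List.Chain' G.Adj (v1 :: t) → W.card ≤ (v1 :: t).length + m →
      ∃ (w1 : V) (s : List V), (w1 :: s).Nodup ∧ (∀ x ∈ w1 :: s, x ∈ W) ∧
        List.Chain' G.Adj (w1 :: s) ∧ ∀ w ∈ W, G.Adj w1 w → w ∈ w1 :: s := by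
  intro m
  induction m with
  | zero =>
    intro v1 t hnd hmem hch hlen
    refine ⟨v1, t, hnd, hmem, hch, ?_⟩
    intro w hw hadj
    by_contra hwl
    have hnd' : (w :: v1 :: t).Nodup := List.nodup_cons.2 ⟨hwl, hnd⟩
    have hmem' : ∀ x ∈ w :: v1 :: t, x ∈ W := by
      intro x hx
      rcases List.mem_cons.1 hx with rfl | hx
      · exact hw
      · exact hmem x hx
    have hsub : (w :: v1 :: t).toFinset ⊆ W := fun x hx =>
      hmem' x (List.mem_toFinset.1 hx)
    have hcard := Finset.card_le_card hsub
    rw [List.toFinset_card_of_nodup hnd'] at hcard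
    simp only [List.length_cons] at hcard hlen
    omega
  | succ m ih =>
    intro v1 t hnd hmem hch hlen
    by_cases h : ∃ w ∈ W, G.Adj v1 w ∧ w ∉ v1 :: t
    · obtain ⟨w, hwW, hadj, hwl⟩ := h
      apply ih w (v1 :: t)
      · exact List.nodup_cons.2 ⟨hwl, hnd⟩
      · intro x hx
        rcases List.mem_cons.1 hx with rfl | hx
        · exact hwW
        · exact hmem x hx
      · exact List.isChain_cons_cons.2 ⟨hadj.symm, hch⟩
      · simp only [List.length_cons] at hlen ⊢; omega
    · push_neg at h
      exact ⟨v1, t, hnd, hmem, hch, fun w hw hadj => h w hw hadj⟩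

/-- abstract cycle construction from a cyclic sequence of distinct pairwise-adjacent
vertices -/
private lemma cyc_valid (E : Finset (Finset V))
    (hE : ∀ e : Finset V, e ∈ E ↔ ∃ a b : V, G.Adj a b ∧ e = {a, b})
    {n : ℕ} (hn3 : 3 ≤ n) (u : Fin n → V) (uinj : Function.Injective u)
    (hadj : ∀ i : Fin n, G.Adj (u i) (u ⟨((i : ℕ) + 1) % n, Nat.mod_lt _ (by omega)⟩)) :
    (LinCyc.cyc n (fun i => {u i, u ⟨((i : ℕ) + 1) % n, Nat.mod_lt _ (by omega)⟩})).valid E ∧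
    (LinCyc.cyc n (fun i => {u i, u ⟨((i : ℕ) + 1) % n, Nat.mod_lt _ (by omega)⟩})).verts
      = Finset.univ.image u := by
  have uinj' : ∀ a b : Fin n, u a = u b → (a : ℕ) = (b : ℕ) := by
    intro a b h
    exact congrArg Fin.val (uinj h)
  constructor
  · refine ⟨hn3, fun i => (hE _).2 ⟨_, _, hadj i, rfl⟩, ?_, ?_⟩
    · -- consecutive
      intro a b hab
      have hane : (a : ℕ) ≠ (b : ℕ) := by
        rcases modc a.isLt with ⟨h, h'⟩ | ⟨h, h'⟩ <;> omega
      have hbsucc : ((b : ℕ) + 1) % n ≠ (a : ℕ) := by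
        rcases modc a.isLt with ⟨h, h'⟩ | ⟨h, h'⟩ <;>
          rcases modc b.isLt with ⟨h2, h2'⟩ | ⟨h2, h2'⟩ <;> omega
      have hbne : (b : ℕ) ≠ ((b : ℕ) + 1) % n := by
        rcases modc b.isLt with ⟨h, h'⟩ | ⟨h, h'⟩ <;> omega
      have hfb : (⟨((a : ℕ) + 1) % n, Nat.mod_lt _ (by omega)⟩ : Fin n) = b :=
        Fin.ext hab
      show (({u a, u ⟨((a : ℕ) + 1) % n, Nat.mod_lt _ (by omega)⟩} : Finset V) ∩
        {u b, u ⟨((b : ℕ) + 1) % n, Nat.mod_lt _ (by omega)⟩}).card = 1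
      rw [hfb]
      have key : ({u a, u b} ∩ {u b, u ⟨((b : ℕ) + 1) % n, Nat.mod_lt _ (by omega)⟩}
          : Finset V) = {u b} := by
        apply Finset.ext
        intro x
        simp only [Finset.mem_inter, Finset.mem_insert, Finset.mem_singleton]
        constructor
        · rintro ⟨h1 | h1, h2 | h2⟩
          · exact absurd (uinj' _ _ (h1.symm.trans h2)) hane
          · exact absurd (uinj' _ _ (h1.symm.trans h2)).symm hbsucc
          · exact h1
          · exact absurd (uinj' _ _ (h1.symm.trans h2)) hbne
        · rintro rfl
          exact ⟨Or.inr rfl, Or.inl rfl⟩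
      rw [key, Finset.card_singleton]
    · -- nonconsecutive disjoint
      intro a b hne1 hne2 hne3
      have hane : (a : ℕ) ≠ (b : ℕ) := fun h => hne1 (Fin.ext h)
      have hsne : ((a : ℕ) + 1) % n ≠ ((b : ℕ) + 1) % n := by
        intro h
        rcases modc a.isLt with ⟨h1, h1'⟩ | ⟨h1, h1'⟩ <;>
          rcases modc b.isLt with ⟨h2, h2'⟩ | ⟨h2, h2'⟩ <;> omega
      apply Finset.eq_empty_of_forall_notMem
      intro x hx
      simp only [Finset.mem_inter, Finset.mem_insert, Finset.mem_singleton] at hx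
      obtain ⟨h1 | h1, h2 | h2⟩ := hx
      · exact hane (uinj' _ _ (h1.symm.trans h2))
      · exact hne3 (uinj' _ _ (h1.symm.trans h2)).symm
      · exact hne2 (uinj' _ _ (h1.symm.trans h2))
      · exact hsne (uinj' _ _ (h1.symm.trans h2))
  · -- verts = image u univ
    apply Finset.ext
    intro x
    rw [LinCyc.verts]
    simp only [Finset.mem_biUnion, Finset.mem_univ, true_and, Finset.mem_image,
      Finset.mem_insert, Finset.mem_singleton]
    constructor
    · rintro ⟨i, h | h⟩
      · exact ⟨i, h.symm⟩
      · exact ⟨_, h.symm⟩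
    · rintro ⟨i, rfl⟩
      exact ⟨i, Or.inl rfl⟩

private lemma cycle_step (E : Finset (Finset V))
    (hE : ∀ e : Finset V, e ∈ E ↔ ∃ a b : V, G.Adj a b ∧ e = {a, b})
    (W : Finset V) (hW : W.Nonempty) :
    ∃ C : LinCyc V, C.valid E ∧ C.verts ⊆ W ∧ ∃ v1 ∈ C.verts, v1 ∈ W ∧
      ∀ w ∈ W, G.Adj v1 w → w ∈ C.verts := by
  classical
  obtain ⟨v, hv⟩ := hW
  obtain ⟨v1, t, hnd, hmem, hch, hmaxl⟩ := extend_path G W W.card v [] (by simp)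
    (by simpa using hv) (List.isChain_singleton v) (by simp)
  set l : List V := v1 :: t with hl
  have hv1W : v1 ∈ W := hmem v1 (by simp [hl])
  have hlpos : 0 < l.length := by simp [hl]
  have h0 : l.get ⟨0, hlpos⟩ = v1 := rfl
  have hget : ∀ (a b : ℕ) (ha : a < l.length) (hb : b < l.length), a = b →
      l.get ⟨a, ha⟩ = l.get ⟨b, hb⟩ := by
    intro a b ha hb h; subst h; rfl
  have hgetW : ∀ (i : Fin l.length), l.get i ∈ W := fun i => hmem _ (l.get_mem _)
  by_cases hN : ∃ w ∈ W, G.Adj v1 w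
  · -- there is a neighbor; pick the farthest one along the path
    obtain ⟨j, hjadj, hjmax⟩ : ∃ j : Fin l.length, G.Adj v1 (l.get j) ∧
        ∀ i : Fin l.length, G.Adj v1 (l.get i) → (i : ℕ) ≤ (j : ℕ) := by
      set I : Finset (Fin l.length) :=
        Finset.univ.filter (fun i => G.Adj v1 (l.get i)) with hI
      have hIne : I.Nonempty := by
        obtain ⟨w, hwW, hadj⟩ := hN
        obtain ⟨i, hi⟩ := List.mem_iff_get.1 (hmaxl w hwW hadj)
        exact ⟨i, Finset.mem_filter.2 ⟨Finset.mem_univ _, by rw [hi]; exact hadj⟩⟩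
      refine ⟨I.max' hIne, (Finset.mem_filter.1 (I.max'_mem hIne)).2, ?_⟩
      intro i hi
      exact Finset.le_max' I i (Finset.mem_filter.2 ⟨Finset.mem_univ _, hi⟩)
    have hidx : ∀ w ∈ W, G.Adj v1 w →
        ∃ i : Fin l.length, l.get i = w ∧ (i : ℕ) ≤ (j : ℕ) := by
      intro w hwW hadj
      obtain ⟨i, hi⟩ := List.mem_iff_get.1 (hmaxl w hwW hadj)
      exact ⟨i, hi, hjmax i (by rw [hi]; exact hadj)⟩
    have hjpos : 0 < (j : ℕ) := by
      rcases Nat.eq_zero_or_pos (j : ℕ) with h | h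
      · exfalso
        have : l.get j = v1 := by
          rw [← h0]; exact hget _ _ _ _ h
        rw [this] at hjadj
        exact G.irrefl hjadj
      · exact h
    by_cases hj1 : (j : ℕ) = 1
    · -- single edge
      refine ⟨.edge {v1, l.get j}, ?_, ?_, v1, ?_, hv1W, ?_⟩
      · exact (hE _).2 ⟨v1, l.get j, hjadj, rfl⟩
      · intro x hx
        rw [LinCyc.verts] at hx
        rcases Finset.mem_insert.1 hx with rfl | hx
        · exact hv1W
        · rw [Finset.mem_singleton.1 hx]; exact hgetW j
      · rw [LinCyc.verts]; exact Finset.mem_insert_self _ _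
      · intro w hwW hadj
        obtain ⟨i, hiw, hile⟩ := hidx w hwW hadj
        rw [LinCyc.verts]
        rw [hj1] at hile
        rcases Nat.le_one_iff_eq_zero_or_eq_one.1 hile with h | h
        · have : l.get i = v1 := by rw [← h0]; exact hget _ _ _ _ h
          rw [← hiw, this]; exact Finset.mem_insert_self _ _
        · have : l.get i = l.get j := hget _ _ _ _ (by omega)
          rw [← hiw, this]
          exact Finset.mem_insert_of_mem (Finset.mem_singleton_self _)
    · -- genuine cycle on the first j+1 vertices
      have hj2 : 2 ≤ (j : ℕ) := by omega
      have hnl : (j : ℕ) + 1 ≤ l.length := j.isLt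
      have hn3 : 3 ≤ (j : ℕ) + 1 := by omega
      set n : ℕ := (j : ℕ) + 1 with hn
      set u : Fin n → V := fun i => l.get ⟨(i : ℕ), lt_of_lt_of_le i.isLt hnl⟩ with hu
      have uinj : Function.Injective u := by
        intro a b h
        rw [hu] at h
        have h2 := (List.Nodup.get_inj_iff hnd).1 h
        have h3 : (a : ℕ) = (b : ℕ) := Fin.mk_eq_mk.1 h2
        exact Fin.ext h3
      have hadjc : ∀ i : Fin n,
          G.Adj (u i) (u ⟨((i : ℕ) + 1) % n, Nat.mod_lt _ (by omega)⟩) := by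
        intro i
        rcases modc i.isLt with ⟨h, h'⟩ | ⟨h, h'⟩
        · have hlt : (i : ℕ) < l.length - 1 := by omega
          have hcg := List.isChain_iff_getElem.1 hch (i : ℕ) (by omega)
          have e1 : u i = l.get ⟨(i : ℕ), by omega⟩ := by rw [hu]
          have e2 : u ⟨((i : ℕ) + 1) % n, Nat.mod_lt _ (by omega)⟩
              = l.get ⟨(i : ℕ) + 1, by omega⟩ := by
            rw [hu]; exact hget _ _ _ _ h
          rw [e1, e2]; exact hcg
        · have hij : (i : ℕ) = (j : ℕ) := by omega
          have e1 : u i = l.get j := by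
            rw [hu]
            have := hget (i : ℕ) (j : ℕ) (lt_of_lt_of_le i.isLt hnl) j.isLt hij
            simpa using this
          have e2 : u ⟨((i : ℕ) + 1) % n, Nat.mod_lt _ (by omega)⟩ = v1 := by
            rw [hu, ← h0]; exact hget _ _ _ _ h
          rw [e1, e2]; exact hjadj.symm
      obtain ⟨hval, hverts⟩ := cyc_valid G E hE hn3 u uinj hadjc
      refine ⟨_, hval, ?_, v1, ?_, hv1W, ?_⟩
      · rw [hverts]
        intro x hx
        obtain ⟨i, _, rfl⟩ := Finset.mem_image.1 hx
        rw [hu]; exact hgetW _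
      · rw [hverts]
        refine Finset.mem_image.2 ⟨⟨0, by omega⟩, Finset.mem_univ _, ?_⟩
        exact h0
      · intro w hwW hadj
        obtain ⟨i, hiw, hile⟩ := hidx w hwW hadj
        rw [hverts]
        refine Finset.mem_image.2 ⟨⟨(i : ℕ), by omega⟩, Finset.mem_univ _, ?_⟩
        exact hiw
  · -- isolated vertex
    push_neg at hN
    refine ⟨.vert v1, trivial, ?_, v1, ?_, hv1W, ?_⟩
    · intro x hx
      rw [LinCyc.verts, Finset.mem_singleton] at hx
      rw [hx]; exact hv1W
    · rw [LinCyc.verts]; exact Finset.mem_singleton_self _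
    · intro w hwW hadj
      exact absurd hadj (hN w hwW)

private lemma cover (E : Finset (Finset V))
    (hE : ∀ e : Finset V, e ∈ E ↔ ∃ a b : V, G.Adj a b ∧ e = {a, b}) (W : Finset V) :
    ∃ (k : ℕ) (c : Fin k → LinCyc V), k ≤ alphaOn G W ∧ (∀ i, (c i).valid E) ∧
      (∀ i, (c i).verts ⊆ W) ∧ ∀ x ∈ W, ∃! i, x ∈ (c i).verts := by
  classical
  induction W using Finset.strongInduction with
  | _ W ih =>
    rcases W.eq_empty_or_nonempty with rfl | hW
    · exact ⟨0, Fin.elim0, Nat.zero_le _, fun i => i.elim0, fun i => i.elim0,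
        fun x hx => absurd hx (Finset.notMem_empty x)⟩
    · obtain ⟨C, hCval, hCsub, v1, hv1C, hv1W, hnbr⟩ := cycle_step G E hE W hW
      have hss : W \ C.verts ⊂ W := by
        refine Finset.ssubset_iff_of_subset (Finset.sdiff_subset) |>.2 ?_
        exact ⟨v1, hv1W, fun h => (Finset.mem_sdiff.1 h).2 hv1C⟩
      obtain ⟨k, c, hk, hval, hsub, huniq⟩ := ih _ hss
      have hdrop := alpha_drop G W C.verts v1 hv1W hv1C hnbr
      refine ⟨k + 1, Fin.cases C c, by omega, ?_, ?_, ?_⟩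
      · intro i
        refine Fin.cases ?_ ?_ i
        · simpa using hCval
        · intro i'; simpa using hval i'
      · intro i
        refine Fin.cases ?_ ?_ i
        · simpa using hCsub
        · intro i'
          simp only [Fin.cases_succ]
          exact fun x hx => (Finset.mem_sdiff.1 (hsub i' hx)).1
      · intro x hx
        by_cases hxC : x ∈ C.verts
        · refine ⟨0, by simpa using hxC, ?_⟩
          intro i
          refine Fin.cases ?_ ?_ i
          · intro _; rfl
          · intro i' hi'
            exfalso
            have : x ∈ (c i').verts := by simpa using hi'
            exact (Finset.mem_sdiff.1 (hsub i' this)).2 hxC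
        · have hx' : x ∈ W \ C.verts := Finset.mem_sdiff.2 ⟨hx, hxC⟩
          obtain ⟨i, hi, hiu⟩ := huniq x hx'
          refine ⟨i.succ, by simpa using hi, ?_⟩
          intro i'
          refine Fin.cases ?_ ?_ i'
          · intro h0'
            exact absurd (by simpa using h0') hxC
          · intro ii hii
            have : ii = i := hiu ii (by simpa using hii)
            rw [this]

end Posa

/-- Pósa's theorem: the vertex set of every finite simple graph `G` can be
partitioned into at most `α(G)` vertex-disjoint cycles, where a single vertex or a
single edge is accepted as a cycle.  The graph is encoded as the set `E` of its
2-element edges, so that a valid linear cycle all of whose hyperedges are 2-element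
sets is exactly a graph cycle. -/
theorem posa_partition_into_cycles
    {V : Type*} [Fintype V] [DecidableEq V] (G : SimpleGraph V) [DecidableRel G.Adj]
    (E : Finset (Finset V))
    (hE : ∀ e : Finset V, e ∈ E ↔ ∃ a b : V, G.Adj a b ∧ e = {a, b}) :
    ∃ (k : ℕ) (c : Fin k → LinCyc V),
      k ≤ Finset.sup
        (Finset.univ.powerset.filter fun S : Finset V =>
          ∀ a ∈ S, ∀ b ∈ S, ¬ G.Adj a b) Finset.card ∧
      (∀ i, (c i).valid E) ∧
      (∀ x : V, ∃! i, x ∈ (c i).verts) := by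
  obtain ⟨k, c, hk, hval, _, huniq⟩ := cover G E hE Finset.univ
  exact ⟨k, c, hk, hval, fun x => huniq x (Finset.mem_univ x)⟩
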